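/- arXiv:2112.10340 — 4 statements merged into one kernel-verified Lean document; each statement's English description precedes it below -/
import Mathlib

section
/- Let q be an odd prime power, A = 𝔽_q[T], P ∈ A monic irreducible, α ≥ 2 an integer, and m ∈ A monic with P^{α−1} exactly dividing m; write m' = m/P^{α−1} ∈ A and set n = P·m. For Q ∈ A define the matrix M_Q = (1 − mQ, P^{α−1}Q; −m·m'·Q, 1 + mQ), which has entries in A and determinant 1 (so M_Q ∈ Γ₀(m)). Then for every γ ∈ Γ₀(m) there exists a unique Q ∈ A with deg Q < deg P such that γ = δ·M_Q for some δ ∈ Γ₀(n). In other words, {M_Q : Q ∈ A, deg Q < deg P} is a complete set of representatives for the right cosets Γ₀(n)\Γ₀(m). -/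
open Polynomial Matrix

/-- `Γ₀(n)` as a set of 2×2 matrices over `A = 𝔽_q[T]`: entries in `A`, determinant a
nonzero constant (i.e. in `𝔽_q^×`), and lower-left entry divisible by `n`. -/
def IsGamma0 {F : Type*} [Field F] (n : F[X]) (M : Matrix (Fin 2) (Fin 2) F[X]) : Prop :=
  (∃ ζ : Fˣ, M.det = C (ζ : F)) ∧ n ∣ M 1 0

/-- Solving a linear congruence mod an irreducible polynomial. -/
lemma solve_cong {F : Type*} [Field F] {P : F[X]} (hPmonic : P.Monic) (hPirr : Irreducible P)
    (e f : F[X]) (hf : ¬ P ∣ f) :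
    ∃! Q : F[X], Q.degree < P.degree ∧ P ∣ e + Q * f := by
  obtain ⟨u, v, huv⟩ := (hPirr.coprime_iff_not_dvd).mpr hf
  have hQeq : (-(e * v)) %ₘ P = -(e * v) - P * ((-(e * v)) /ₘ P) :=
    eq_sub_of_add_eq (modByMonic_add_div _ P)
  have hQdeg : ((-(e * v)) %ₘ P).degree < P.degree := degree_modByMonic_lt _ hPmonic
  have hQdvd : P ∣ e + ((-(e * v)) %ₘ P) * f :=
    ⟨e * u - ((-(e * v)) /ₘ P) * f, by linear_combination (-e) * huv + f * hQeq⟩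
  refine ⟨(-(e * v)) %ₘ P, ⟨hQdeg, hQdvd⟩, ?_⟩
  rintro Q' ⟨hQ'deg, t', ht'⟩
  obtain ⟨t, ht⟩ := hQdvd
  have hdvd : P ∣ (Q' - (-(e * v)) %ₘ P) * f := ⟨t' - t, by linear_combination ht' - ht⟩
  rcases hPirr.prime.dvd_mul.mp hdvd with h | h
  · have hdeg : (Q' - (-(e * v)) %ₘ P).degree < P.degree :=
      lt_of_le_of_lt (degree_sub_le _ _) (max_lt hQ'deg hQdeg)
    exact sub_eq_zero.mp (Polynomial.eq_zero_of_dvd_of_degree_lt h hdeg)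
  · exact absurd h hf

lemma entry10 {R : Type*} (a b c d : R) : !![a, b; c, d] 1 0 = c := by simp

lemma mul_entry10 {R : Type*} [CommRing R] (M : Matrix (Fin 2) (Fin 2) R) (a b c d : R) :
    (M * !![a, b; c, d]) 1 0 = M 1 0 * a + M 1 1 * c := by
  rw [Matrix.mul_apply, Fin.sum_univ_two]
  simp

/-- Let `q` be an odd prime power, `A = 𝔽_q[T]`, `P` monic irreducible,
`α ≥ 2`, `m` monic with `P^(α−1)` exactly dividing `m`; write `m' = m / P^(α−1)` and
`n = P·m`.  For `Q ∈ A` let `M_Q = (1 − mQ, P^(α−1)Q; −m·m'·Q, 1 + mQ)`; it has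
entries in `A` and determinant `1` (so `M_Q ∈ Γ₀(m)`).  Then for every `γ ∈ Γ₀(m)`
there is a unique `Q ∈ A` with `deg Q < deg P` such that `γ = δ·M_Q` for some
`δ ∈ Γ₀(n)`; i.e. the `M_Q` are a complete set of representatives for `Γ₀(n)\Γ₀(m)`. -/
theorem statement4 {F : Type*} [Field F] [Fintype F] (p r : ℕ) (hp : p.Prime)
    (hodd : Odd p) (hr : 0 < r) (hcard : Fintype.card F = p ^ r)
    (P : F[X]) (hPmonic : P.Monic) (hPirr : Irreducible P)
    (α : ℕ) (hα : 2 ≤ α)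
    (m m' : F[X]) (hmmonic : m.Monic) (hm' : m = P ^ (α - 1) * m')
    (hexact : ¬ P ^ α ∣ m) :
    (∀ Q : F[X],
      (!![1 - m * Q, P ^ (α - 1) * Q; -(m * m' * Q), 1 + m * Q]).det = 1 ∧
      IsGamma0 m !![1 - m * Q, P ^ (α - 1) * Q; -(m * m' * Q), 1 + m * Q]) ∧
    ∀ γ : Matrix (Fin 2) (Fin 2) F[X], IsGamma0 m γ →
      ∃! Q : F[X], Q.degree < P.degree ∧
        ∃ δ : Matrix (Fin 2) (Fin 2) F[X], IsGamma0 (P * m) δ ∧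
          γ = δ * !![1 - m * Q, P ^ (α - 1) * Q; -(m * m' * Q), 1 + m * Q] := by
  have hm0 : m ≠ 0 := hmmonic.ne_zero
  subst hm'
  set m : F[X] := P ^ (α - 1) * m' with hmdef
  have hdet : ∀ Q : F[X],
      (!![1 - m * Q, P ^ (α - 1) * Q; -(m * m' * Q), 1 + m * Q]).det = 1 := by
    intro Q
    rw [Matrix.det_fin_two_of, hmdef]
    ring
  have hdetN : ∀ Q : F[X],
      (!![1 + m * Q, -(P ^ (α - 1) * Q); m * m' * Q, 1 - m * Q]).det = 1 := by
    intro Q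
    rw [Matrix.det_fin_two_of, hmdef]
    ring
  have hMN : ∀ Q : F[X],
      !![1 - m * Q, P ^ (α - 1) * Q; -(m * m' * Q), 1 + m * Q] *
      !![1 + m * Q, -(P ^ (α - 1) * Q); m * m' * Q, 1 - m * Q] = 1 := by
    intro Q
    rw [Matrix.mul_fin_two, Matrix.one_fin_two, hmdef]
    congr 1 <;> ring
  have hNM : ∀ Q : F[X],
      !![1 + m * Q, -(P ^ (α - 1) * Q); m * m' * Q, 1 - m * Q] *
      !![1 - m * Q, P ^ (α - 1) * Q; -(m * m' * Q), 1 + m * Q] = 1 := by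
    intro Q
    rw [Matrix.mul_fin_two, Matrix.one_fin_two, hmdef]
    congr 1 <;> ring
  refine ⟨fun Q => ⟨hdet Q, ⟨1, by rw [hdet Q]; simp⟩, by
    rw [entry10]; exact ⟨-(m' * Q), by ring⟩⟩, fun γ hγ => ?_⟩
  obtain ⟨⟨ζ, hζ⟩, c₁, hc₁⟩ := hγ
  have hPm : P ∣ m := dvd_mul_of_dvd_left (dvd_pow_self P (by omega : α - 1 ≠ 0)) m'
  have hα1 : (α - 1) + 1 = α := by omega
  have hPm' : ¬ P ∣ m' := by
    rintro ⟨t, ht⟩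
    refine hexact ⟨t, ?_⟩
    calc m = P ^ (α - 1) * (P * t) := by rw [hmdef, ht]
      _ = P ^ ((α - 1) + 1) * t := by rw [pow_succ]; ring
      _ = P ^ α * t := by rw [hα1]
  have hPd : ¬ P ∣ γ 1 1 := by
    intro h
    have hdvd : P ∣ C (ζ : F) := by
      rw [← hζ, Matrix.det_fin_two, hc₁]
      exact dvd_sub (h.mul_left _) ((hPm.mul_right c₁).mul_left _)
    exact hPirr.not_isUnit (isUnit_of_dvd_unit hdvd (isUnit_C.mpr ζ.isUnit))
  have hf : ¬ P ∣ m * c₁ + γ 1 1 * m' := by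
    intro h
    have h2 : P ∣ γ 1 1 * m' := (dvd_add_right (hPm.mul_right c₁)).mp h
    rcases hPirr.prime.dvd_mul.mp h2 with h' | h'
    exacts [hPd h', hPm' h']
  obtain ⟨Q, ⟨hQdeg, hQdvd⟩, hQuniq⟩ := solve_cong hPmonic hPirr c₁ (m * c₁ + γ 1 1 * m') hf
  have key : ∀ Q' : F[X],
      (∃ δ : Matrix (Fin 2) (Fin 2) F[X], IsGamma0 (P * m) δ ∧
        γ = δ * !![1 - m * Q', P ^ (α - 1) * Q'; -(m * m' * Q'), 1 + m * Q']) ↔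
      P ∣ c₁ + Q' * (m * c₁ + γ 1 1 * m') := by
    intro Q'
    constructor
    · rintro ⟨δ, ⟨_, hδdvd⟩, hδ⟩
      have hδeq : δ = γ * !![1 + m * Q', -(P ^ (α - 1) * Q'); m * m' * Q', 1 - m * Q'] := by
        calc δ = δ * (!![1 - m * Q', P ^ (α - 1) * Q'; -(m * m' * Q'), 1 + m * Q'] *
            !![1 + m * Q', -(P ^ (α - 1) * Q'); m * m' * Q', 1 - m * Q']) := by
              rw [hMN Q', Matrix.mul_one]
          _ = _ := by rw [← Matrix.mul_assoc, ← hδ]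
      have hδ10 : δ 1 0 = m * (c₁ + Q' * (m * c₁ + γ 1 1 * m')) := by
        rw [hδeq, mul_entry10, hc₁]; ring
      rw [hδ10] at hδdvd
      obtain ⟨t, ht⟩ := hδdvd
      exact ⟨t, mul_left_cancel₀ hm0 (by rw [ht]; ring)⟩
    · rintro ⟨t, ht⟩
      refine ⟨γ * !![1 + m * Q', -(P ^ (α - 1) * Q'); m * m' * Q', 1 - m * Q'],
        ⟨⟨ζ, by rw [Matrix.det_mul, hζ, hdetN Q', mul_one]⟩, ?_⟩, ?_⟩
      · rw [mul_entry10, hc₁, show (m * c₁) * (1 + m * Q') + γ 1 1 * (m * m' * Q') =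
          m * (c₁ + Q' * (m * c₁ + γ 1 1 * m')) by ring, ht]
        exact ⟨t, by ring⟩
      · rw [Matrix.mul_assoc, hNM Q', Matrix.mul_one]
  refine ⟨Q, ⟨hQdeg, (key Q).mpr hQdvd⟩, ?_⟩
  rintro Q' ⟨hQ'deg, hQ'mem⟩
  exact hQuniq Q' ⟨hQ'deg, (key Q').mp hQ'mem⟩
end

section
/- Let q be an odd prime power, A = 𝔽_q[T], K = 𝔽_q(T), and n ∈ A monic. Let P and P₁ be distinct monic irreducible polynomials in A with P^α exactly dividing n (α ≥ 1) and P₁ dividing n. Let b, d ∈ A satisfy P^{2α}·d − n·b = P^α, and set W = (P^α, b; n, P^α·d). Then for every Q ∈ A with deg Q < deg P₁ there exists a unique Q' ∈ A with deg Q' < deg P₁ such that, computing in GL₂(K), ((1, Q; 0, P₁)·W)·(W·(1, Q'; 0, P₁))^{-1} ∈ Γ₀(n); equivalently, (1, Q; 0, P₁)·W = γ·W·(1, Q'; 0, P₁) for some γ ∈ Γ₀(n) with det γ = 1. -/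
open Polynomial Matrix

/-- Let `q` be an odd prime power, `A = 𝔽_q[T]`, `n ∈ A` monic.  Let `P`
and `P₁` be distinct monic irreducibles with `P^α` exactly dividing `n` (`α ≥ 1`) and
`P₁ ∣ n`.  Let `b, d ∈ A` with `P^(2α)·d − n·b = P^α` and `W = (P^α, b; n, P^α·d)`.
Then for every `Q ∈ A` with `deg Q < deg P₁` there is a unique `Q' ∈ A` with
`deg Q' < deg P₁` such that `(1, Q; 0, P₁)·W = γ·W·(1, Q'; 0, P₁)` for some
`γ ∈ Γ₀(n)` with `det γ = 1` (equivalently, `((1,Q;0,P₁)·W)·(W·(1,Q';0,P₁))⁻¹ ∈ Γ₀(n)`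
in `GL₂(K)`). -/
theorem statement7 {F : Type*} [Field F] [Fintype F] (p r : ℕ) (hp : p.Prime)
    (hodd : Odd p) (hr : 0 < r) (hcard : Fintype.card F = p ^ r)
    (n : F[X]) (hnmonic : n.Monic)
    (P P₁ : F[X]) (hPmonic : P.Monic) (hP₁monic : P₁.Monic)
    (hPirr : Irreducible P) (hP₁irr : Irreducible P₁) (hne : P ≠ P₁)
    (α : ℕ) (hα : 1 ≤ α) (hdvd : P ^ α ∣ n) (hexact : ¬ P ^ (α + 1) ∣ n)
    (hP₁dvd : P₁ ∣ n)
    (b d : F[X]) (hbd : P ^ (2 * α) * d - n * b = P ^ α) :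
    ∀ Q : F[X], Q.degree < P₁.degree →
      ∃! Q' : F[X], Q'.degree < P₁.degree ∧
        ∃ γ : Matrix (Fin 2) (Fin 2) F[X], γ.det = 1 ∧ n ∣ γ 1 0 ∧
          !![1, Q; 0, P₁] * !![P ^ α, b; n, P ^ α * d] =
            γ * (!![P ^ α, b; n, P ^ α * d] * !![1, Q'; 0, P₁]) := by
  intro Q hQ
  set X : F[X] := P ^ α with hXdef
  have hP0 : P ≠ 0 := hPmonic.ne_zero
  have hX0 : X ≠ 0 := pow_ne_zero _ hP0
  have hP₁0 : P₁ ≠ 0 := hP₁monic.ne_zero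
  have hbd' : X ^ 2 * d - n * b = X := by
    rw [hXdef, ← pow_mul, mul_comm α 2]; exact hbd
  have hndvdP : ¬ P₁ ∣ P := by
    intro h
    exact hne (eq_of_monic_of_associated hP₁monic hPmonic
      (hP₁irr.associated_of_dvd hPirr h)).symm
  have hcopP : IsCoprime P₁ P := hP₁irr.coprime_iff_not_dvd.mpr hndvdP
  have hcopX : IsCoprime P₁ X := hcopP.pow_right
  obtain ⟨m, hm⟩ := hdvd      -- n = X * m
  obtain ⟨n₁, hn₁⟩ := hP₁dvd  -- n = P₁ * n₁
  have hG : X * m = P₁ * n₁ := by linear_combination hn₁ - hm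
  have hXd : P₁ ∣ X * (X * d - 1) := ⟨n₁ * b, by linear_combination hbd' + b * hn₁⟩
  obtain ⟨s, hs0⟩ := hcopX.dvd_of_dvd_mul_left hXd
  have hs : X * d = 1 + P₁ * s := by linear_combination hs0
  have hmb : m * b = P₁ * s := by
    have h := mul_left_cancel₀ hX0 (show X * (m * b) = X * (P₁ * s) by
      linear_combination (-b) * hm + X * hs + (-1) * hbd')
    exact h
  have hH : X * s = b * n₁ := by
    have h := mul_left_cancel₀ hP₁0 (show P₁ * (X * s) = P₁ * (b * n₁) by
      linear_combination (-X) * hs + hbd' + b * hn₁)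
    exact h
  obtain ⟨u, v, huv⟩ := id hcopX
  set Q' : F[X] := (v * (Q + b)) %ₘ P₁ with hQ'def
  have hQ'deg : Q'.degree < P₁.degree := degree_modByMonic_lt _ hP₁monic
  have hc : Q' + P₁ * (v * (Q + b) /ₘ P₁) = v * (Q + b) := modByMonic_add_div _ P₁
  set c : F[X] := v * (Q + b) /ₘ P₁ with hcdef
  set t : F[X] := -(u * (Q + b)) - X * c with htdef
  have ht : Q' * X = Q + b + P₁ * t := by
    rw [htdef]; linear_combination X * hc + (Q + b) * huv
  refine ⟨Q', ⟨hQ'deg, ?_⟩, ?_⟩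
  · -- existence of γ
    refine ⟨!![n₁ * Q' * (1 + Q * m) + Q * n₁ * d * (P₁ - 1) + 1 + s * (P₁ - 1),
              -t - n₁ * Q * Q' + Q * s * (1 - P₁) - b;
              n * (m * Q' + d * (P₁ - 1)),
              -(n * Q') + m * b * (1 - P₁) + 1], ?_, ?_, ?_⟩
    · -- determinant
      rw [Matrix.det_fin_two_of]
      have hXD : X * ((n₁ * Q' * (1 + Q * m) + Q * n₁ * d * (P₁ - 1) + 1 + s * (P₁ - 1)) *
          (-(n * Q') + m * b * (1 - P₁) + 1) -
          (-t - n₁ * Q * Q' + Q * s * (1 - P₁) - b) * (n * (m * Q' + d * (P₁ - 1)))) = X * 1 := by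
        linear_combination ((-1)*Q'^2*X*n₁ + Q'*m*X*b + Q'*m*X*Q*s*P₁ + (-1)*Q'*m*X*Q*s + Q'*m*X*t + (-1)*Q'*X*s*P₁ + Q'*X*s + (-1)*Q'*X + d*X*b*P₁ + (-1)*d*X*b + d*X*Q*s*P₁^2 + (-2)*d*X*Q*s*P₁ + d*X*Q*s + d*X*t*P₁ + (-1)*d*X*t) * hm + (m*X*b*P₁ + (-1)*m*X*b + m*X*Q*s*P₁^2 + (-2)*m*X*Q*s*P₁ + m*X*Q*s + m*X*t*P₁ + (-1)*m*X*t + (-1)*m*b*Q*n₁*P₁^2 + (2)*m*b*Q*n₁*P₁ + (-1)*m*b*Q*n₁ + Q*n₁*P₁ + (-1)*Q*n₁) * hs + ((-1)*Q'*m*X*n₁ + m^2*X*b + m^2*X*Q*s*P₁ + (-1)*m^2*X*Q*s + m^2*X*t + (-1)*m^2*b*Q*n₁*P₁ + m^2*b*Q*n₁ + (-1)*m*X*s*P₁ + m*X*s + (-1)*m*X + (-1)*m*b*n₁*P₁ + (-1)*m*t*n₁*P₁ + n₁) * ht + (m*X*b + m*X*Q*s*P₁ + (-1)*m*X*Q*s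 + m*X*Q + m*X*t*P₁ + m*X*t + (-1)*m*b*Q*n₁*P₁ + m*b*Q*n₁ + (-1)*m*Q^2*n₁*P₁ + m*Q^2*n₁ + (-1)*m*Q*t*n₁*P₁^2 + m*Q*t*n₁*P₁ + X*s*P₁ + (-1)*X + (-1)*b*n₁*P₁ + (-1)*Q*s*n₁*P₁^3 + Q*s*n₁*P₁^2 + (-1)*Q*n₁*P₁^2 + Q*n₁*P₁ + (-1)*Q*n₁ + (-1)*t*n₁*P₁^2 + (-1)*t*n₁*P₁) * hmb + (m*Q^2*s*P₁ + (-1)*m*Q^2*s + m*Q*s*t*P₁^2 + (-1)*m*Q*s*t*P₁ + m*Q*t + m*t^2*P₁ + Q*s^2*P₁^3 + (-1)*Q*s^2*P₁^2 + Q*s*P₁^2 + (-2)*Q*s*P₁ + (2)*Q*s + (-1)*Q + s*t*P₁^2 + s*t*P₁ + (-1)*t) * hG + (s*P₁^2 + (-1)) * hH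
      have h2 := mul_left_cancel₀ hX0 hXD
      simpa using h2
    · -- n ∣ γ 1 0
      refine ⟨m * Q' + d * (P₁ - 1), ?_⟩
      simp
    · -- matrix equation
      ext i j : 1
      fin_cases i <;> fin_cases j <;>
        simp only [Matrix.mul_apply, Fin.sum_univ_two, Matrix.cons_val', Matrix.cons_val_zero,
          Matrix.cons_val_one, Matrix.head_cons, Matrix.head_fin_const, Matrix.of_apply,
          Matrix.cons_val_fin_one, Matrix.empty_val', Fin.isValue, Fin.zero_eta, Fin.mk_one]
      · linear_combination (Q'*Q*n₁ + b + Q*s*P₁ + (-1)*Q*s + Q + t) * hm + ((-1)*Q*n₁*P₁ + Q*n₁) * hs + ((-1)*n₁) * ht + (X) * hmb + (Q*s*P₁ + (-1)*Q*s + Q + t) * hG + ((1)) * hH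
      · refine mul_left_cancel₀ hX0 ?_
        linear_combination (Q'^2*X*Q*n₁ + Q'*X*b + Q'*X*Q*s*P₁ + (-1)*Q'*X*Q*s + Q'*X*t) * hm + (Q'*X*Q*n₁ + X*b*P₁ + X*Q*s*P₁^2 + (-1)*X*Q*s*P₁ + X*Q + X*t*P₁ + (-1)*b*Q*n₁*P₁^2 + b*Q*n₁*P₁) * hs + ((-1)*Q'*X*n₁ + m*X*b + m*X*Q*s*P₁ + (-1)*m*X*Q*s + m*X*t + (-1)*m*b*Q*n₁*P₁ + (-1)*X*s*P₁ + X*s + (-1)*X + (-1)*b*n₁*P₁ + (-1)*b*n₁ + Q*s*n₁*P₁ + (-1)*t*n₁*P₁) * ht + (X*b + X*Q*s*P₁ + (-1)*X*Q*s + X*Q + X*t*P₁ + X*t + (-1)*b*Q*n₁*P₁ + (-1)*Q^2*n₁*P₁ + (-1)*Q*t*n₁*P₁^2) * hmb + (Q^2*s*P₁ + (-1)*Q^2*s + Q*s*t*P₁^2 + (-1)*Q*s*t*P₁ + Q*t + t^2*P₁) * hG + (b*P₁ + b + Q*s*P₁^3 + (-1)*Q*s*P₁ + Q*P₁^2 +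 Q + t*P₁^2 + (2)*t*P₁) * hH
      · linear_combination (n*Q' + (-1)*d*X*P₁ + d*X + m*b*P₁ + (-1)*m*b + P₁ + (-1)) * hm + ((-1)*m*X*P₁ + m*X) * hs + (m*X*P₁ + (-1)*m*X) * hmb
      · linear_combination (n*Q'^2 + Q'*d*X + (-1)*Q'*m*b + (-1)*Q' + (-1)*d*b*P₁^2 + d*b*P₁) * hm + (Q'*m*X) * hs + ((-1)*m^2*b + m*s*P₁) * ht + ((-1)*m*b + (-1)*m*Q + (-1)*m*t*P₁) * hmb
  · -- uniqueness
    rintro Q'' ⟨hQ''deg, γ', hdet', hdvd', hmat'⟩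
    have h00 := congrFun (congrFun hmat' 0) 0
    have h01 := congrFun (congrFun hmat' 0) 1
    simp only [Matrix.mul_apply, Fin.sum_univ_two, Matrix.cons_val', Matrix.cons_val_zero,
      Matrix.cons_val_one, Matrix.head_cons, Matrix.head_fin_const, Matrix.of_apply,
      Matrix.cons_val_fin_one, Matrix.empty_val', Fin.isValue] at h00 h01
    have hd1 : P₁ ∣ X * (γ' 0 0 - 1) :=
      ⟨n₁ * (Q - γ' 0 1), by linear_combination (-1) * h00 + (Q - γ' 0 1) * hn₁⟩
    obtain ⟨e', he'0⟩ := hcopX.dvd_of_dvd_mul_left hd1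
    have he' : γ' 0 0 = 1 + P₁ * e' := by linear_combination he'0
    have hd3 : P₁ ∣ X * Q'' - (Q + b) := by
      refine ⟨(-1)*(γ' 0 1)*(Q'')*(n₁) + (-1)*(γ' 0 1)*(s)*(P₁) + (-1)*(γ' 0 1) +
        (-1)*(Q'')*(X)*(e') + (-1)*(b)*(e')*(P₁) + (-1)*(b) + (Q)*(s), ?_⟩
      linear_combination (-1) * h01 + ((-1)*(Q'')*(X) + (-1)*(b)*(P₁)) * he' +
        ((-1)*(γ' 0 1)*(Q'')) * hn₁ + ((-1)*(γ' 0 1)*(P₁) + (Q)) * hs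
    obtain ⟨w, hw⟩ := hd3
    have hd4 : P₁ ∣ X * (Q'' - Q') := ⟨w - t, by linear_combination hw - ht⟩
    have hd5 : P₁ ∣ Q'' - Q' := hcopX.dvd_of_dvd_mul_left hd4
    by_contra hcon
    have hne0 : Q'' - Q' ≠ 0 := sub_ne_zero.mpr hcon
    have hle : P₁.degree ≤ (Q'' - Q').degree := degree_le_of_dvd hd5 hne0
    have hlt : (Q'' - Q').degree < P₁.degree :=
      lt_of_le_of_lt (degree_sub_le _ _) (max_lt hQ''deg hQ'deg)
    exact absurd (lt_of_le_of_lt hle hlt) (lt_irrefl _)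
end

section
/- Let p be an odd prime, q = p^r, and let P ∈ 𝔽_q[T] be a monic polynomial of degree 1. Let l and x be integers with 1 ≤ l ≤ q − 2 and 0 ≤ x ≤ q, set k = x(q−1) + l(q+1), and set x₀ = min(x, l−1). Define the polynomial S = Σ_{j=0}^{x₀} (−1)^{l+j} · C(l−1, j) · C(x, j) · P^{l−j} · (T^q − T)^j ∈ 𝔽_q[T], where C(·,·) are integer binomial coefficients reduced modulo p. Then S ≠ 0; its degree equals l + j_max·(q−1), where j_max is the largest index 0 ≤ j ≤ x₀ with C(l−1, j)·C(x, j) not divisible by p (this set of indices is nonempty since it contains j = 0); and 0 < deg S < k/2. -/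
open Polynomial Finset

/-- Let `p` be an odd prime, `q = p^r`, and `P ∈ 𝔽_q[T]` monic of
degree `1`.  Let `1 ≤ l ≤ q − 2`, `0 ≤ x ≤ q`, `k = x(q−1) + l(q+1)`,
`x₀ = min(x, l−1)`, and
`S = Σ_{j=0}^{x₀} (−1)^(l+j) · C(l−1, j) · C(x, j) · P^(l−j) · (T^q − T)^j ∈ 𝔽_q[T]`
(binomial coefficients reduced mod `p`).  Then `S ≠ 0`, `deg S = l + j_max·(q−1)`
where `j_max` is the largest `0 ≤ j ≤ x₀` with `p ∤ C(l−1, j)·C(x, j)` (a nonempty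
set of indices, containing `j = 0`), and `0 < deg S < k/2`. -/
theorem statement8 {F : Type*} [Field F] [Fintype F] (p r : ℕ) (hp : p.Prime)
    (hodd : Odd p) (hr : 0 < r) (q : ℕ) (hq : q = p ^ r)
    (hcard : Fintype.card F = q)
    (P : F[X]) (hPmonic : P.Monic) (hPdeg : P.degree = 1)
    (l x : ℕ) (hl1 : 1 ≤ l) (hl2 : l ≤ q - 2) (hx : x ≤ q)
    (k : ℕ) (hk : k = x * (q - 1) + l * (q + 1))
    (x₀ : ℕ) (hx₀ : x₀ = min x (l - 1))
    (S : F[X])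
    (hS : S = ∑ j ∈ Finset.range (x₀ + 1),
      (-1) ^ (l + j) * ((l - 1).choose j : F[X]) * (x.choose j : F[X]) *
        P ^ (l - j) * (X ^ q - X) ^ j) :
    S ≠ 0 ∧
    ∃ jmax ≤ x₀, ¬ p ∣ (l - 1).choose jmax * x.choose jmax ∧
      (∀ j, jmax < j → j ≤ x₀ → p ∣ (l - 1).choose j * x.choose j) ∧
      S.natDegree = l + jmax * (q - 1) ∧
      0 < S.natDegree ∧ 2 * S.natDegree < k := by
  haveI hchar : CharP F p := by
    obtain ⟨n, hp', h⟩ := FiniteField.card F (ringChar F)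
    have : ringChar F = p := by
      have hd : ringChar F ∣ p ^ r := by
        rw [← hq, ← hcard, h]; exact dvd_pow_self _ n.ne_zero
      exact (Nat.prime_dvd_prime_iff_eq hp' hp).mp (hp'.dvd_of_dvd_pow hd)
    exact this ▸ ringChar.charP F
  have hq3 : 3 ≤ q := by omega
  -- the set of good indices
  set A : Finset ℕ := (Finset.range (x₀ + 1)).filter
      (fun j => ¬ p ∣ (l - 1).choose j * x.choose j) with hA
  have h0A : 0 ∈ A := by
    refine Finset.mem_filter.mpr ⟨Finset.mem_range.mpr (Nat.succ_pos _), ?_⟩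
    simpa using hp.not_dvd_one
  have hAne : A.Nonempty := ⟨0, h0A⟩
  set jmax := A.max' hAne with hjm
  have hmem : jmax ∈ A := A.max'_mem hAne
  have hjx₀ : jmax ≤ x₀ := by
    have := (Finset.mem_filter.mp hmem).1
    simpa [Nat.lt_succ_iff] using this
  have hgood : ¬ p ∣ (l - 1).choose jmax * x.choose jmax :=
    (Finset.mem_filter.mp hmem).2
  have hbad : ∀ j, jmax < j → j ≤ x₀ → p ∣ (l - 1).choose j * x.choose j := by
    intro j hj1 hj2
    by_contra hnd
    have : j ∈ A := Finset.mem_filter.mpr ⟨Finset.mem_range.mpr (by omega), hnd⟩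
    exact absurd (A.le_max' j this) (by omega)
  clear_value jmax
  clear hjm hmem h0A hAne hA
  -- basic polynomials
  have hXq : (X ^ q - X : F[X]).Monic := by
    apply (monic_X_pow q).sub_of_left
    rw [degree_X_pow, degree_X]
    exact_mod_cast by omega
  have hXqdeg : (X ^ q - X : F[X]).natDegree = q := by
    rw [natDegree_sub_eq_left_of_natDegree_lt, natDegree_X_pow]
    rw [natDegree_X_pow, natDegree_X]; omega
  have hPnd : P.natDegree = 1 := natDegree_eq_of_degree_eq_some hPdeg
  -- monic parts
  set M : ℕ → F[X] := fun j => P ^ (l - j) * (X ^ q - X) ^ j with hM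
  have hMmonic : ∀ j, (M j).Monic := fun j => (hPmonic.pow _).mul (hXq.pow _)
  have hMdeg : ∀ j ≤ x₀, (M j).natDegree = l + j * (q - 1) := by
    intro j hj
    have hjl : j ≤ l - 1 := le_trans hj (by omega)
    rw [hM]
    rw [(hPmonic.pow _).natDegree_mul (hXq.pow _), natDegree_pow, natDegree_pow,
      hPnd, hXqdeg]
    have : j * (q - 1) + j * 1 = j * q := by rw [← Nat.mul_add]; congr 1; omega
    omega
  -- constants
  set c : ℕ → F := fun j => (-1) ^ (l + j) * ((l - 1).choose j : F) * (x.choose j : F)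
    with hc
  have hT : ∀ j, (-1) ^ (l + j) * ((l - 1).choose j : F[X]) * (x.choose j : F[X]) *
        P ^ (l - j) * (X ^ q - X) ^ j = C (c j) * M j := by
    intro j
    rw [hc, hM]
    simp only [map_mul, map_pow, map_neg, map_one, C_eq_natCast]
    ring
  set d : ℕ := l + jmax * (q - 1) with hd
  have hczero : ∀ j, jmax < j → j ≤ x₀ → c j = 0 := by
    intro j h1 h2
    have := hbad j h1 h2
    rcases (Nat.Prime.dvd_mul hp).mp this with h | h
    · have : ((l - 1).choose j : F) = 0 := (CharP.cast_eq_zero_iff F p _).mpr h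
      simp [hc, this]
    · have : ((x.choose j : F)) = 0 := (CharP.cast_eq_zero_iff F p _).mpr h
      simp [hc, this]
  have hcne : c jmax ≠ 0 := by
    have h1 : ¬ p ∣ (l - 1).choose jmax := fun h => hgood (h.mul_right _)
    have h2 : ¬ p ∣ x.choose jmax := fun h => hgood (h.mul_left _)
    have h1' : ((l - 1).choose jmax : F) ≠ 0 := fun h =>
      h1 ((CharP.cast_eq_zero_iff F p _).mp h)
    have h2' : ((x.choose jmax : F)) ≠ 0 := fun h =>
      h2 ((CharP.cast_eq_zero_iff F p _).mp h)
    simp [hc, h1', h2', pow_ne_zero]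
  -- coefficient of S at d
  have hMc : (M jmax).coeff d = 1 := by
    rw [hd, ← hMdeg jmax hjx₀]
    exact (hMmonic jmax).coeff_natDegree
  have hcoeff : S.coeff d = c jmax := by
    rw [hS, finset_sum_coeff]
    rw [Finset.sum_eq_single jmax]
    · rw [hT, coeff_C_mul, hMc, mul_one]
    · intro j hj hne
      rw [hT, coeff_C_mul]
      have hjx : j ≤ x₀ := by simpa [Nat.lt_succ_iff] using hj
      rcases lt_or_gt_of_ne hne with h | h
      · have hlt : (M j).natDegree < d := by
          rw [hMdeg j hjx, hd]
          have : j * (q - 1) < jmax * (q - 1) :=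
            Nat.mul_lt_mul_of_lt_of_le h (le_refl (q - 1)) (by omega)
          omega
        rw [coeff_eq_zero_of_natDegree_lt hlt, mul_zero]
      · rw [hczero j h hjx, zero_mul]
    · intro h
      exact absurd (Finset.mem_range.mpr (by omega)) h
  have hSne : S ≠ 0 := fun h => hcne (by rw [← hcoeff, h, coeff_zero])
  have hge : d ≤ S.natDegree := le_natDegree_of_ne_zero (hcoeff ▸ hcne)
  have hle : S.natDegree ≤ d := by
    rw [hS]
    apply natDegree_sum_le_of_forall_le
    intro j hj
    rw [hT]
    have hjx : j ≤ x₀ := by simpa [Nat.lt_succ_iff] using hj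
    rcases le_or_gt j jmax with h | h
    · refine le_trans (natDegree_C_mul_le _ _) ?_
      rw [hMdeg j hjx, hd]
      have : j * (q - 1) ≤ jmax * (q - 1) := Nat.mul_le_mul_right _ h
      omega
    · rw [hczero j h hjx, map_zero, zero_mul, natDegree_zero]
      exact Nat.zero_le _
  have hdeg : S.natDegree = d := le_antisymm hle hge
  refine ⟨hSne, jmax, hjx₀, hgood, hbad, hdeg, ?_, ?_⟩
  · rw [hdeg]; omega
  · rw [hdeg, hd, hk]
    have hjx : jmax ≤ x := by omega
    have hjl : jmax ≤ l - 1 := by omega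
    obtain ⟨l', rfl⟩ : ∃ l', l = l' + 1 := ⟨l - 1, by omega⟩
    obtain ⟨m, rfl⟩ : ∃ m, q = m + 1 := ⟨q - 1, by omega⟩
    simp only [Nat.add_sub_cancel] at *
    have h1 : 2 * jmax * m ≤ (x + l') * m :=
      Nat.mul_le_mul_right m (by omega)
    nlinarith [h1]
end

section
/- Let p be an odd prime, q = p^r, and let P ∈ 𝔽_q[T] be a monic polynomial of degree 1. Let x be an integer with 0 ≤ x ≤ q, set k = x(q−1) + (q²−1), and set y₀ = min(x, q−2). Define the polynomial S = Σ_{j=0}^{y₀} (−1)^{j+1} · C(q−2, j) · C(x, j) · P^{q−1−j} · (T^q − T)^j ∈ 𝔽_q[T], where C(·,·) are integer binomial coefficients reduced modulo p. Then S ≠ 0; its degree equals (j_max + 1)·(q−1), where j_max is the largest index 0 ≤ j ≤ y₀ with C(q−2, j)·C(x, j) not divisible by p (this set of indices is nonempty since it contains j = 0); and 0 < deg S < k/2. -/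
open Polynomial Finset

/-- Let `p` be an odd prime, `q = p^r`, and `P ∈ 𝔽_q[T]` monic of
degree `1`.  Let `0 ≤ x ≤ q`, `k = x(q−1) + (q²−1)`, `y₀ = min(x, q−2)`, and
`S = Σ_{j=0}^{y₀} (−1)^(j+1) · C(q−2, j) · C(x, j) · P^(q−1−j) · (T^q − T)^j ∈ 𝔽_q[T]`
(binomial coefficients reduced mod `p`).  Then `S ≠ 0`,
`deg S = (j_max + 1)·(q−1)` where `j_max` is the largest `0 ≤ j ≤ y₀` with
`p ∤ C(q−2, j)·C(x, j)` (a nonempty set of indices, containing `j = 0`), and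
`0 < deg S < k/2`. -/
theorem statement9 {F : Type*} [Field F] [Fintype F] (p r : ℕ) (hp : p.Prime)
    (hodd : Odd p) (hr : 0 < r) (q : ℕ) (hq : q = p ^ r)
    (hcard : Fintype.card F = q)
    (P : F[X]) (hPmonic : P.Monic) (hPdeg : P.degree = 1)
    (x : ℕ) (hx : x ≤ q)
    (k : ℕ) (hk : k = x * (q - 1) + (q ^ 2 - 1))
    (y₀ : ℕ) (hy₀ : y₀ = min x (q - 2))
    (S : F[X])
    (hS : S = ∑ j ∈ Finset.range (y₀ + 1),
      (-1) ^ (j + 1) * ((q - 2).choose j : F[X]) * (x.choose j : F[X]) *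
        P ^ (q - 1 - j) * (X ^ q - X) ^ j) :
    S ≠ 0 ∧
    ∃ jmax ≤ y₀, ¬ p ∣ (q - 2).choose jmax * x.choose jmax ∧
      (∀ j, jmax < j → j ≤ y₀ → p ∣ (q - 2).choose j * x.choose j) ∧
      S.natDegree = (jmax + 1) * (q - 1) ∧
      0 < S.natDegree ∧ 2 * S.natDegree < k := by
  -- basic numerics
  have hp3 : 3 ≤ p := by
    rcases hodd with ⟨m, hm⟩
    have := hp.two_le
    omega
  have hq3 : 3 ≤ q := by
    have : p ≤ p ^ r := Nat.le_self_pow hr.ne' p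
    omega
  -- characteristic
  haveI : CharP F (ringChar F) := ringChar.charP F
  have hcp : (ringChar F).Prime := CharP.char_is_prime F _
  have hcast0 : ((Fintype.card F : ℕ) : F) = 0 := FiniteField.cast_card_eq_zero F
  have hdvd : ringChar F ∣ p ^ r := by
    have := (CharP.cast_eq_zero_iff F (ringChar F) (Fintype.card F)).mp hcast0
    rwa [hcard, hq] at this
  have hchar : ringChar F = p :=
    (Nat.prime_dvd_prime_iff_eq hcp hp).mp (hcp.dvd_of_dvd_pow hdvd)
  haveI hcharF : CharP F p := hchar ▸ (ringChar.charP F)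
  haveI hcharFX : CharP F[X] p := inferInstance
  -- cast-to-F[X] zero iff p dvd
  have hcastiff : ∀ n : ℕ, ((n : F[X]) = 0) ↔ p ∣ n := fun n =>
    CharP.cast_eq_zero_iff F[X] p n
  -- the term function
  set f : ℕ → F[X] := fun j =>
    (-1) ^ (j + 1) * ((q - 2).choose j : F[X]) * (x.choose j : F[X]) *
      P ^ (q - 1 - j) * (X ^ q - X) ^ j with hf
  -- basic polynomial facts
  have hP0 : P ≠ 0 := hPmonic.ne_zero
  have hPnd : P.natDegree = 1 := natDegree_eq_of_degree_eq_some hPdeg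
  have hwdeg : (X ^ q - X : F[X]).degree = (q : ℕ) := by
    rw [degree_sub_eq_left_of_degree_lt, degree_X_pow]
    rw [degree_X_pow, degree_X]
    exact_mod_cast (by omega : 1 < q)
  have hw0 : (X ^ q - X : F[X]) ≠ 0 := by
    intro h
    rw [h, degree_zero] at hwdeg
    exact absurd hwdeg (by simp)
  have hwnd : (X ^ q - X : F[X]).natDegree = q := natDegree_eq_of_degree_eq_some hwdeg
  -- arithmetic identity
  have harith : ∀ j, j ≤ q - 2 → q - 1 - j + j * q = (j + 1) * (q - 1) := by
    intro j hj
    obtain ⟨d, rfl⟩ : ∃ d, q = j + d + 2 := ⟨q - 2 - j, by omega⟩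
    have h1 : j + d + 2 - 1 - j = d + 1 := by omega
    have h2 : j + d + 2 - 1 = j + d + 1 := by omega
    rw [h1, h2]; ring
  -- zero terms
  have hzero : ∀ j, p ∣ (q - 2).choose j * x.choose j → f j = 0 := by
    intro j hj
    have hAB : ((q - 2).choose j : F[X]) * (x.choose j : F[X]) = 0 := by
      rw [← Nat.cast_mul]
      exact (hcastiff _).mpr hj
    simp only [hf]
    rw [mul_assoc ((-1 : F[X]) ^ (j + 1)), hAB, mul_zero, zero_mul, zero_mul]
  -- nonzero terms and their degrees
  have hterm : ∀ j, j ≤ y₀ → ¬ p ∣ (q - 2).choose j * x.choose j →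
      f j ≠ 0 ∧ (f j).natDegree = (j + 1) * (q - 1) := by
    intro j hjy hnd
    have hA : ((q - 2).choose j : F[X]) ≠ 0 := by
      intro h
      exact hnd (Dvd.dvd.mul_right ((hcastiff _).mp h) _)
    have hB : ((x.choose j : ℕ) : F[X]) ≠ 0 := by
      intro h
      exact hnd (Dvd.dvd.mul_left ((hcastiff _).mp h) _)
    have hc : ((-1 : F[X]) ^ (j + 1)) ≠ 0 := pow_ne_zero _ (by simp)
    have hcd : ((-1 : F[X]) ^ (j + 1)).natDegree = 0 := by
      simp [natDegree_pow]
    have h1 : ((-1 : F[X]) ^ (j + 1) * ((q - 2).choose j : F[X]) * (x.choose j : F[X])) ≠ 0 :=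
      mul_ne_zero (mul_ne_zero hc hA) hB
    have hd1 : ((-1 : F[X]) ^ (j + 1) * ((q - 2).choose j : F[X]) * (x.choose j : F[X])).natDegree = 0 := by
      rw [natDegree_mul (mul_ne_zero hc hA) hB, natDegree_mul hc hA, hcd,
        natDegree_natCast, natDegree_natCast]
    have h2 : ((-1 : F[X]) ^ (j + 1) * ((q - 2).choose j : F[X]) * (x.choose j : F[X]) *
        P ^ (q - 1 - j)) ≠ 0 := mul_ne_zero h1 (pow_ne_zero _ hP0)
    constructor
    · exact mul_ne_zero h2 (pow_ne_zero _ hw0)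
    · simp only [hf]
      rw [natDegree_mul h2 (pow_ne_zero _ hw0), natDegree_mul h1 (pow_ne_zero _ hP0),
        hd1, natDegree_pow, natDegree_pow, hPnd, hwnd, zero_add, mul_one]
      exact harith j (by omega)
  -- the index set
  set Jset : Finset ℕ :=
    (Finset.range (y₀ + 1)).filter (fun j => ¬ p ∣ (q - 2).choose j * x.choose j) with hJ
  have h0mem : 0 ∈ Jset := by
    rw [hJ, Finset.mem_filter]
    refine ⟨Finset.mem_range.mpr (by omega), ?_⟩
    simp only [Nat.choose_zero_right, mul_one]
    intro h
    exact hp.ne_one (Nat.dvd_one.mp h)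
  have hJne : Jset.Nonempty := ⟨0, h0mem⟩
  set jmax : ℕ := Jset.max' hJne with hjm
  have hjmem : jmax ∈ Jset := Jset.max'_mem hJne
  have hjrange : jmax ≤ y₀ := by
    have h := Finset.mem_range.mp (Finset.mem_filter.mp hjmem).1
    omega
  have hjnd : ¬ p ∣ (q - 2).choose jmax * x.choose jmax :=
    (Finset.mem_filter.mp hjmem).2
  obtain ⟨hfne, hfdeg⟩ := hterm jmax hjrange hjnd
  set D : ℕ := (jmax + 1) * (q - 1) with hD
  -- degree bound for each term
  have hdegle : ∀ j ∈ Finset.range (y₀ + 1), (f j).degree ≤ (D : WithBot ℕ) := by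
    intro j hj
    by_cases hdj : p ∣ (q - 2).choose j * x.choose j
    · rw [hzero j hdj, degree_zero]
      exact bot_le
    · have hjJ : j ∈ Jset := Finset.mem_filter.mpr ⟨hj, hdj⟩
      have hjle : j ≤ jmax := Finset.le_max' Jset j hjJ
      obtain ⟨hne, hnd⟩ := hterm j (by have := Finset.mem_range.mp hj; omega) hdj
      rw [degree_eq_natDegree hne, hnd]
      exact_mod_cast Nat.mul_le_mul_right (q - 1) (by omega)
  have hSdegle : S.degree ≤ (D : WithBot ℕ) := by
    rw [hS]
    exact (degree_sum_le _ _).trans (Finset.sup_le (fun j hj => hdegle j hj))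
  -- coefficient at D
  have hcoeff : S.coeff D = (f jmax).coeff D := by
    rw [hS, finset_sum_coeff]
    refine Finset.sum_eq_single jmax ?_ ?_
    · intro j hj hne
      by_cases hdj : p ∣ (q - 2).choose j * x.choose j
      · show (f j).coeff D = 0
        rw [hzero j hdj, coeff_zero]
      · have hjJ : j ∈ Jset := Finset.mem_filter.mpr ⟨hj, hdj⟩
        have hjle : j ≤ jmax := Finset.le_max' Jset j hjJ
        obtain ⟨hne', hnd⟩ := hterm j (by have := Finset.mem_range.mp hj; omega) hdj
        show (f j).coeff D = 0
        refine coeff_eq_zero_of_natDegree_lt ?_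
        rw [hnd, hD]
        have hjlt : j < jmax := lt_of_le_of_ne hjle hne
        exact mul_lt_mul_of_pos_right (by omega) (by omega)
    · intro h
      exact absurd ((Finset.mem_filter.mp hjmem).1) h
  have hcD : (f jmax).coeff D ≠ 0 := by
    rw [← hfdeg, coeff_natDegree]
    exact leadingCoeff_ne_zero.mpr hfne
  have hSc : S.coeff D ≠ 0 := by rw [hcoeff]; exact hcD
  have hSne : S ≠ 0 := fun h => hSc (by simp [h])
  have hSdeg : S.degree = (D : WithBot ℕ) :=
    le_antisymm hSdegle (le_degree_of_ne_zero hSc)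
  have hSnd : S.natDegree = D := natDegree_eq_of_degree_eq_some hSdeg
  refine ⟨hSne, jmax, hjrange, hjnd, ?_, hSnd, ?_, ?_⟩
  · intro j hjlt hjy
    by_contra hdj
    have hjJ : j ∈ Jset := Finset.mem_filter.mpr
      ⟨Finset.mem_range.mpr (by omega), hdj⟩
    have := Finset.le_max' Jset j hjJ
    omega
  · rw [hSnd, hD]
    exact Nat.mul_pos (by omega) (by omega)
  · rw [hSnd, hD, hk]
    have hjx : jmax ≤ x := by omega
    have hjq : jmax ≤ q - 2 := by omega
    obtain ⟨q', rfl⟩ : ∃ q', q = q' + 2 := ⟨q - 2, by omega⟩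
    have hsq : (q' + 2) ^ 2 = q' * q' + 4 * q' + 3 + 1 := by ring
    have h1 : (q' + 2) ^ 2 - 1 = q' * q' + 4 * q' + 3 := by omega
    have h2 : q' + 2 - 1 = q' + 1 := by omega
    rw [h1, h2]
    have hjq' : jmax ≤ q' := by omega
    nlinarith [hjq', hjx]
end
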